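/- Pareto case bounded relative error (Proposition 2): let Y_1,...,Y_N be i.i.d. exponential with mean 1, X_i = exp(Y_i/α) − 1 (i.e., X_i Pareto(α)), ℓ(γ) = P(∑_{k=1}^L X^{(k)} ≤ γ) and ℓ_1(γ) = P(∑_{k=1}^L Y^{(k)} ≤ αL·log(1+γ/L)). Then limsup_{γ→0⁺} ℓ_1(γ)/ℓ(γ) ≤ L^N < ∞. -/

import Mathlib

open MeasureTheory ProbabilityTheory Filter Set Topology

noncomputable section

/-- The `k`-th largest value (0-indexed) among `x 0, ..., x (N-1)`. -/
def ordDesc {N : ℕ} (x : Fin N → ℝ) (k : Fin N) : ℝ := (x ∘ Tuple.sort x) k.rev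

/-- Sum of the `L` largest values among `x 0, ..., x (N-1)`. -/
def topSum {N : ℕ} (L : ℕ) (x : Fin N → ℝ) : ℝ :=
  ∑ k ∈ Finset.univ.filter (fun k : Fin N => (k : ℕ) < L), ordDesc x k

/-- Every value is at most the largest order statistic. -/
lemma le_ordDesc_zero {N : ℕ} (hN : 0 < N) (x : Fin N → ℝ) (j : Fin N) :
    x j ≤ ordDesc x ⟨0, hN⟩ := by
  have hm := Tuple.monotone_sort x
  have hxj : x j = (x ∘ Tuple.sort x) ((Tuple.sort x).symm j) := by simp
  rw [hxj, ordDesc]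
  refine hm ?_
  rw [Fin.le_def, Fin.val_rev]
  have h1 := ((Tuple.sort x).symm j).isLt
  have h2 : (⟨0, hN⟩ : Fin N).val = 0 := rfl
  omega

/-- If all entries are nonnegative, the max is at most the top-L sum. -/
lemma ordDesc_zero_le_topSum {N L : ℕ} (hL : 0 < L) (hN : 0 < N) (x : Fin N → ℝ)
    (hx : ∀ i, 0 ≤ x i) : ordDesc x ⟨0, hN⟩ ≤ topSum L x := by
  refine Finset.single_le_sum (f := ordDesc x) (fun k _ => hx _) ?_
  simp [Finset.mem_filter, hL]

/-- If all entries are at most `b ≥ 0` then the top-L sum is at most `L * b`. -/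
lemma topSum_le {N L : ℕ} (hLN : L ≤ N) (x : Fin N → ℝ) (b : ℝ) (hb : 0 ≤ b)
    (hx : ∀ i, x i ≤ b) : topSum L x ≤ (L : ℝ) * b := by
  have hcard : (Finset.univ.filter (fun k : Fin N => (k : ℕ) < L)).card ≤ L := by
    have := Finset.card_le_card_of_injOn (f := Fin.val)
      (s := Finset.univ.filter (fun k : Fin N => (k : ℕ) < L)) (t := Finset.range L)
      (by intro a ha; simp only [Finset.mem_coe, Finset.mem_filter] at ha; simp [ha.2])
      (fun a _ b _ h => Fin.val_injective h)
    simpa using this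
  calc topSum L x ≤ (Finset.univ.filter (fun k : Fin N => (k : ℕ) < L)).card • b :=
        Finset.sum_le_card_nsmul _ _ _ (fun k _ => hx _)
    _ = ((Finset.univ.filter (fun k : Fin N => (k : ℕ) < L)).card : ℝ) * b := by
        rw [nsmul_eq_mul]
    _ ≤ (L : ℝ) * b := by
        exact mul_le_mul_of_nonneg_right (by exact_mod_cast hcard) hb

/-- Bounded relative error of the IS estimator in the Pareto case (Proposition 2). -/
theorem stmt6 {Ω : Type*} [MeasurableSpace Ω] (μ : Measure Ω) [IsProbabilityMeasure μ]
    (N L : ℕ) (hL1 : 1 ≤ L) (hLN : L ≤ N) (α : ℝ) (hα : 0 < α)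
    (Y : Fin N → Ω → ℝ) (hYm : ∀ i, Measurable (Y i))
    (hYindep : iIndepFun Y μ)
    (hYlaw : ∀ i, μ.map (Y i) = expMeasure 1) :
    Filter.limsup (fun γ : ℝ =>
        -- ℓ₁(γ) = P(∑_{k=1}^L Y^{(k)} ≤ αL·log(1+γ/L))
        μ {ω | topSum L (fun i => Y i ω) ≤ α * L * Real.log (1 + γ / (L : ℝ))} /
        -- ℓ(γ) = P(∑_{k=1}^L X^{(k)} ≤ γ) with X_i = exp(Y_i/α) − 1 Pareto(α)
        μ {ω | topSum L (fun i => Real.exp (Y i ω / α) - 1) ≤ γ})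
      (𝓝[>] (0:ℝ)) ≤ (L : ENNReal) ^ N := by
  haveI : IsProbabilityMeasure (expMeasure 1) := isProbabilityMeasure_expMeasure one_pos
  have hN : 0 < N := lt_of_lt_of_le hL1 hLN
  have hL0 : (0:ℝ) < L := by exact_mod_cast hL1
  -- value of the exponential CDF
  have hpval : ∀ a : ℝ, 0 ≤ a →
      expMeasure 1 (Iic a) = ENNReal.ofReal (1 - Real.exp (-a)) := by
    intro a ha
    have h1 := cdf_expMeasure_eq (r := 1) one_pos a
    rw [if_pos ha] at h1
    have h2 : cdf (expMeasure 1) a = ((expMeasure 1) (Iic a)).toReal :=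
      by rw [cdf_eq_real]; rfl
    rw [h2] at h1
    rw [← ENNReal.ofReal_toReal (measure_ne_top (expMeasure 1) (Iic a)), h1, one_mul]
  -- product formula from independence
  have hprod : ∀ a : ℝ, μ (⋂ i, Y i ⁻¹' Iic a) = (expMeasure 1 (Iic a)) ^ N := by
    intro a
    rw [hYindep.meas_iInter (fun i => ⟨Iic a, measurableSet_Iic, rfl⟩)]
    have hone : ∀ i, μ (Y i ⁻¹' Iic a) = expMeasure 1 (Iic a) := by
      intro i
      rw [← hYlaw i, Measure.map_apply (hYm i) measurableSet_Iic]
    simp [hone, Finset.prod_const]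
  -- negative values are null
  have hnegnull : μ (⋃ i, Y i ⁻¹' Iio 0) = 0 := by
    refine measure_iUnion_null fun i => ?_
    rw [← Measure.map_apply (hYm i) measurableSet_Iio, hYlaw i]
    show expMeasure 1 (Iio 0) = 0
    rw [expMeasure, gammaMeasure, withDensity_apply _ measurableSet_Iio]
    exact lintegral_gammaPDF_of_nonpos le_rfl
  -- the main eventual bound
  have key : ∀ᶠ γ in 𝓝[>] (0:ℝ),
      μ {ω | topSum L (fun i => Y i ω) ≤ α * L * Real.log (1 + γ / (L : ℝ))} /
        μ {ω | topSum L (fun i => Real.exp (Y i ω / α) - 1) ≤ γ}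
      ≤ ENNReal.ofReal
        ((∑ j ∈ Finset.range L, Real.exp (-(α * Real.log (1 + γ / (L:ℝ)))) ^ j) ^ N) := by
    filter_upwards [self_mem_nhdsWithin] with γ (hγ : 0 < γ)
    have h1γ : (1:ℝ) < 1 + γ / L := by
      have := div_pos hγ hL0; linarith
    set d : ℝ := α * Real.log (1 + γ / (L:ℝ)) with hd
    have hdpos : 0 < d := mul_pos hα (Real.log_pos h1γ)
    set x : ℝ := Real.exp (-d) with hx
    have hx0 : 0 < x := Real.exp_pos _
    have hx1 : x < 1 := by
      rw [hx]; exact Real.exp_lt_one_iff.mpr (by linarith)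
    set S : ℝ := ∑ j ∈ Finset.range L, x ^ j with hS
    have hSnonneg : 0 ≤ S := Finset.sum_nonneg fun j _ => pow_nonneg hx0.le j
    have hc : α * (L:ℝ) * Real.log (1 + γ / (L:ℝ)) = (L:ℝ) * d := by rw [hd]; ring
    -- numerator upper bound
    have hsub : {ω | topSum L (fun i => Y i ω) ≤ α * L * Real.log (1 + γ / (L : ℝ))}
        ⊆ (⋂ i, Y i ⁻¹' Iic ((L:ℝ) * d)) ∪ (⋃ i, Y i ⁻¹' Iio 0) := by
      intro ω hω
      simp only [mem_setOf_eq] at hω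
      by_cases hng : ∃ i, Y i ω < 0
      · exact Or.inr (mem_iUnion.2 ⟨hng.choose, hng.choose_spec⟩)
      · push_neg at hng
        refine Or.inl (mem_iInter.2 fun j => ?_)
        have h1 : Y j ω ≤ ordDesc (fun i => Y i ω) ⟨0, hN⟩ := le_ordDesc_zero hN (fun i => Y i ω) j
        have h2 : ordDesc (fun i => Y i ω) ⟨0, hN⟩ ≤ topSum L (fun i => Y i ω) :=
          ordDesc_zero_le_topSum hL1 hN _ hng
        have : Y j ω ≤ (L:ℝ) * d := by rw [← hc]; exact h1.trans (h2.trans hω)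
        exact this
    have hnum : μ {ω | topSum L (fun i => Y i ω) ≤ α * L * Real.log (1 + γ / (L : ℝ))}
        ≤ (expMeasure 1 (Iic ((L:ℝ) * d))) ^ N := by
      calc μ _ ≤ μ ((⋂ i, Y i ⁻¹' Iic ((L:ℝ) * d)) ∪ (⋃ i, Y i ⁻¹' Iio 0)) :=
            measure_mono hsub
        _ ≤ μ (⋂ i, Y i ⁻¹' Iic ((L:ℝ) * d)) + μ (⋃ i, Y i ⁻¹' Iio 0) :=
            measure_union_le _ _
        _ = (expMeasure 1 (Iic ((L:ℝ) * d))) ^ N := by rw [hprod, hnegnull, add_zero]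
    -- denominator lower bound
    have hsub2 : (⋂ i, Y i ⁻¹' Iic d)
        ⊆ {ω | topSum L (fun i => Real.exp (Y i ω / α) - 1) ≤ γ} := by
      intro ω hω
      simp only [mem_setOf_eq]
      have hb : ∀ i, Real.exp (Y i ω / α) - 1 ≤ γ / L := by
        intro i
        have hYi : Y i ω ≤ d := mem_iInter.1 hω i
        have hdiv : Y i ω / α ≤ Real.log (1 + γ / L) := by
          rw [div_le_iff₀ hα, mul_comm]; exact hYi
        have := Real.exp_le_exp.mpr hdiv
        rw [Real.exp_log (by linarith)] at this
        linarith
      have := topSum_le hLN _ (γ / L) (div_pos hγ hL0).le hb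
      rwa [mul_div_cancel₀ _ hL0.ne'] at this
    have hden : (expMeasure 1 (Iic d)) ^ N
        ≤ μ {ω | topSum L (fun i => Real.exp (Y i ω / α) - 1) ≤ γ} := by
      rw [← hprod]; exact measure_mono hsub2
    -- put together
    have hratio := ENNReal.div_le_div hnum hden
    refine hratio.trans ?_
    have hpc : expMeasure 1 (Iic ((L:ℝ) * d)) = ENNReal.ofReal ((1 - x) * S) := by
      rw [hpval _ (by positivity)]
      congr 1
      have hexp : Real.exp (-((L:ℝ) * d)) = x ^ L := by
        rw [hx, ← Real.exp_nat_mul]; ring_nf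
      rw [hexp, hS]
      linear_combination geom_sum_mul x L
    have hpd : expMeasure 1 (Iic d) = ENNReal.ofReal (1 - x) := by
      rw [hpval _ hdpos.le]
    have hdivpow : (expMeasure 1 (Iic ((L:ℝ) * d))) ^ N / (expMeasure 1 (Iic d)) ^ N
        = (expMeasure 1 (Iic ((L:ℝ) * d)) / expMeasure 1 (Iic d)) ^ N := by
      rw [div_eq_mul_inv, div_eq_mul_inv, ENNReal.inv_pow, ← mul_pow]
    rw [hdivpow, hpc, hpd, ← ENNReal.ofReal_div_of_pos (by linarith),
      mul_div_cancel_left₀ _ (by linarith : (1:ℝ) - x ≠ 0),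
      ENNReal.ofReal_pow hSnonneg]
  -- limit of the bounding function
  have htend : Tendsto (fun γ : ℝ => ENNReal.ofReal
      ((∑ j ∈ Finset.range L, Real.exp (-(α * Real.log (1 + γ / (L:ℝ)))) ^ j) ^ N))
      (𝓝[>] (0:ℝ)) (𝓝 ((L : ENNReal) ^ N)) := by
    have hA : ContinuousAt (fun γ : ℝ => 1 + γ / (L:ℝ)) 0 := by fun_prop
    have hB : ContinuousAt (fun γ : ℝ => Real.log (1 + γ / (L:ℝ))) 0 :=
      ContinuousAt.comp (Real.continuousAt_log (by norm_num)) hA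
    have hC : ContinuousAt (fun γ : ℝ => Real.exp (-(α * Real.log (1 + γ / (L:ℝ))))) 0 :=
      ((hB.const_mul α).neg).rexp
    have hCt : Tendsto (fun γ : ℝ => Real.exp (-(α * Real.log (1 + γ / (L:ℝ)))))
        (𝓝[>] (0:ℝ)) (𝓝 1) := by
      have := hC.tendsto.mono_left (nhdsWithin_le_nhds (s := Ioi (0:ℝ)))
      simpa using this
    have hSum : Tendsto (fun γ : ℝ =>
        ∑ j ∈ Finset.range L, Real.exp (-(α * Real.log (1 + γ / (L:ℝ)))) ^ j)
        (𝓝[>] (0:ℝ)) (𝓝 (L : ℝ)) := by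
      have := tendsto_finset_sum (Finset.range L)
        (fun j _ => hCt.pow j : ∀ j ∈ Finset.range L, Tendsto
          (fun γ : ℝ => Real.exp (-(α * Real.log (1 + γ / (L:ℝ)))) ^ j)
          (𝓝[>] (0:ℝ)) (𝓝 (1 ^ j)))
      simpa using this
    have hPow : Tendsto (fun γ : ℝ =>
        (∑ j ∈ Finset.range L, Real.exp (-(α * Real.log (1 + γ / (L:ℝ)))) ^ j) ^ N)
        (𝓝[>] (0:ℝ)) (𝓝 ((L : ℝ) ^ N)) := hSum.pow N
    have := (ENNReal.continuous_ofReal.tendsto _).comp hPow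
    have heq : ENNReal.ofReal ((L:ℝ) ^ N) = (L : ENNReal) ^ N := by
      rw [ENNReal.ofReal_pow (by positivity), ENNReal.ofReal_natCast]
    rw [← heq]
    exact this
  calc Filter.limsup _ (𝓝[>] (0:ℝ))
      ≤ Filter.limsup (fun γ : ℝ => ENNReal.ofReal
        ((∑ j ∈ Finset.range L, Real.exp (-(α * Real.log (1 + γ / (L:ℝ)))) ^ j) ^ N))
        (𝓝[>] (0:ℝ)) := limsup_le_limsup key
    _ = (L : ENNReal) ^ N := htend.limsup_eq
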